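/- arXiv:2101.02352 — 3 statements merged into one kernel-verified Lean document; each statement's English description precedes it below -/
import Mathlib

section
/- For points x = (x₁,x₂) and y = (y₁,y₂) in [0,2)×[0,1), if x₁ − y₁ − 1/2 is an integer and 4(x₂ − y₂) is an odd integer (i.e., x₁ − y₁ = k ± 1/2 and x₂ − y₂ = k'/2 ± 1/4 for some integers k, k'), then the Möbius distance attains its upper bound: dist(x,y) = 3/4. -/
/-- `mmod k u` is the unique element of `[0, k)` such that `u - mmod k u`
is an integer multiple of `k`. -/
noncomputable def mmod (k : ℕ) (u : ℝ) : ℝ := u - (k : ℝ) * (⌊u / (k : ℝ)⌋ : ℤ)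

/-- `dmod k u = min (mmod k u) (k - mmod k u)`. -/
noncomputable def dmod (k : ℕ) (u : ℝ) : ℝ := min (mmod k u) ((k : ℝ) - mmod k u)

/-- Distance on the Möbius ring `M²`, whose points lie in `[0,2) × [0,1)`. -/
noncomputable def distM2 (x y : ℝ × ℝ) : ℝ :=
  min (dmod 2 (y.1 - x.1) + dmod 1 (y.2 - x.2))
      (dmod 2 (y.1 - x.1 + 1) + dmod 1 (y.2 - x.2 + 1/2))

lemma mmod_add_int (k : ℕ) (hk : (k:ℝ) ≠ 0) (u : ℝ) (n : ℤ) :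
    mmod k (u + k * n) = mmod k u := by
  unfold mmod
  have h : (u + (k:ℝ) * n) / k = u / k + n := by field_simp
  rw [h, Int.floor_add_intCast]
  push_cast
  ring

lemma dmod2_half (u : ℝ) (h : ∃ n : ℤ, u = n + 1/2) : dmod 2 u = 1/2 := by
  obtain ⟨n, hn⟩ := h
  rcases Int.even_or_odd n with ⟨m, hm⟩ | ⟨m, hm⟩
  · have : u = 1/2 + 2 * (m : ℤ) := by rw [hn, hm]; push_cast; ring
    rw [this]
    have := mmod_add_int 2 (by norm_num) (1/2) m
    unfold dmod
    rw [show ((2:ℕ):ℝ) * (m:ℝ) = (2:ℝ) * (m:ℝ) by norm_num] at this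
    rw [this]
    unfold mmod
    norm_num [Int.floor_eq_zero_iff, Set.mem_Ico]
  · have : u = 3/2 + 2 * (m : ℤ) := by rw [hn, hm]; push_cast; ring
    rw [this]
    have := mmod_add_int 2 (by norm_num) (3/2) m
    rw [show ((2:ℕ):ℝ) * (m:ℝ) = (2:ℝ) * (m:ℝ) by norm_num] at this
    unfold dmod
    rw [this]
    unfold mmod
    norm_num [Int.floor_eq_zero_iff, Set.mem_Ico]

lemma dmod1_quarter (u : ℝ) (h : ∃ n : ℤ, 4 * u = 2 * n + 1) : dmod 1 u = 1/4 := by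
  obtain ⟨n, hn⟩ := h
  rcases Int.even_or_odd n with ⟨m, hm⟩ | ⟨m, hm⟩
  · have : u = 1/4 + 1 * (m : ℤ) := by
      have : (4:ℝ) * u = 2 * ((m:ℝ) + m) + 1 := by rw [hn, hm]; push_cast; ring
      linarith
    rw [this]
    have := mmod_add_int 1 (by norm_num) (1/4) m
    rw [show ((1:ℕ):ℝ) * (m:ℝ) = (1:ℝ) * (m:ℝ) by norm_num] at this
    unfold dmod
    rw [this]
    unfold mmod
    norm_num [Int.floor_eq_zero_iff, Set.mem_Ico]
  · have : u = 3/4 + 1 * (m : ℤ) := by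
      have : (4:ℝ) * u = 2 * (2 * (m:ℝ) + 1) + 1 := by rw [hn, hm]; push_cast; ring
      linarith
    rw [this]
    have := mmod_add_int 1 (by norm_num) (3/4) m
    rw [show ((1:ℕ):ℝ) * (m:ℝ) = (1:ℝ) * (m:ℝ) by norm_num] at this
    unfold dmod
    rw [this]
    unfold mmod
    norm_num [Int.floor_eq_zero_iff, Set.mem_Ico]

/-- If `x₁ - y₁ - 1/2` is an integer and `4 (x₂ - y₂)` is an odd integer, then the
Möbius distance attains its upper bound `3/4`. -/
theorem distM2_eq_upper_bound (x y : ℝ × ℝ)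
    (hx : x ∈ Set.Ico (0:ℝ) 2 ×ˢ Set.Ico (0:ℝ) 1)
    (hy : y ∈ Set.Ico (0:ℝ) 2 ×ˢ Set.Ico (0:ℝ) 1)
    (h1 : ∃ k : ℤ, x.1 - y.1 - 1/2 = (k : ℝ))
    (h2 : ∃ k' : ℤ, 4 * (x.2 - y.2) = 2 * (k' : ℝ) + 1) :
    distM2 x y = 3/4 := by
  obtain ⟨k, hk⟩ := h1
  obtain ⟨k', hk'⟩ := h2
  unfold distM2
  rw [dmod2_half (y.1 - x.1) ⟨-k - 1, by push_cast; linarith⟩,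
      dmod2_half (y.1 - x.1 + 1) ⟨-k, by push_cast; linarith⟩,
      dmod1_quarter (y.2 - x.2) ⟨-k' - 1, by push_cast; linarith⟩,
      dmod1_quarter (y.2 - x.2 + 1/2) ⟨-k', by push_cast; linarith⟩]
  norm_num
end

section
/- For coprime positive integers p and q, the upper bound of the Möbius distance on M^{q/p} is attained at the point (1/(2p), 1/(2q)): dist((0,0),(1/(2p),1/(2q))) = 1/(2p) + 1/(2q). -/
/-- Distance on the Möbius ring `M^{q/p}`, whose points lie in `[0,q) × [0,p)`:
the minimum over `j ∈ {0, …, p*q - 1}` of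
`dmod q (y₁ - x₁ + j/p) + dmod p (y₂ - x₂ + j/q)`. -/
noncomputable def distMqp (p q : ℕ) (x y : ℝ × ℝ) : ℝ :=
  sInf {v : ℝ | ∃ j ∈ Finset.range (p * q),
    v = dmod q (y.1 - x.1 + (j : ℝ) / (p : ℝ)) + dmod p (y.2 - x.2 + (j : ℝ) / (q : ℝ))}

/-- Addition on the Möbius ring `M^{q/p}`. -/
noncomputable def oplusMqp (p q : ℕ) (x y : ℝ × ℝ) : ℝ × ℝ :=
  (mmod q (x.1 + y.1), mmod p (x.2 + y.2))

lemma mmod_nonneg (k : ℕ) (hk : 0 < k) (u : ℝ) : 0 ≤ mmod k u := by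
  have hk' : (0:ℝ) < k := by exact_mod_cast hk
  have h := Int.floor_le (u / (k:ℝ))
  have h2 : (k:ℝ) * ⌊u / (k:ℝ)⌋ ≤ (k:ℝ) * (u / (k:ℝ)) := by
    exact mul_le_mul_of_nonneg_left h hk'.le
  rw [mul_div_cancel₀ u hk'.ne'] at h2
  unfold mmod; linarith

lemma mmod_lt (k : ℕ) (hk : 0 < k) (u : ℝ) : mmod k u < k := by
  have hk' : (0:ℝ) < k := by exact_mod_cast hk
  have h := Int.lt_floor_add_one (u / (k:ℝ))
  have h2 : (k:ℝ) * (u / (k:ℝ)) < (k:ℝ) * (⌊u / (k:ℝ)⌋ + 1) := by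
    exact mul_lt_mul_of_pos_left h hk'
  rw [mul_div_cancel₀ u hk'.ne'] at h2
  unfold mmod; nlinarith

lemma odd_aux (p : ℕ) (hp : 0 < p) (x : ℝ) (c : ℤ) (hc : Odd c)
    (hx : x * (2 * (p:ℝ)) = c) (h0 : 0 ≤ x) : 1 / (2 * (p:ℝ)) ≤ x := by
  have hp' : (0:ℝ) < 2 * p := by positivity
  have hc0 : (0:ℝ) ≤ c := by nlinarith
  have hc0' : (0:ℤ) ≤ c := by exact_mod_cast hc0
  have hne : c ≠ 0 := by rintro rfl; simp at hc
  have hc1 : (1:ℤ) ≤ c := lt_of_le_of_ne hc0' (Ne.symm hne)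
  have hc1' : (1:ℝ) ≤ c := by exact_mod_cast hc1
  rw [div_le_iff₀ hp']
  linarith [hx ▸ hc1']

lemma dmod_lower (k p : ℕ) (hk : 0 < k) (hp : 0 < p) (c : ℤ) (hc : Odd c) :
    1 / (2 * (p:ℝ)) ≤ dmod k ((c:ℝ) / (2 * (p:ℝ))) := by
  set u : ℝ := (c:ℝ) / (2 * (p:ℝ)) with hu
  have hp' : (0:ℝ) < 2 * p := by positivity
  set n : ℤ := ⌊u / (k:ℝ)⌋ with hn
  have hm : mmod k u = u - (k:ℝ) * n := rfl
  refine le_min ?_ ?_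
  · refine odd_aux p hp _ (c - 2 * p * k * n) ?_ ?_ (mmod_nonneg k hk u)
    · obtain ⟨m, hm'⟩ := hc
      exact ⟨m - p * k * n, by rw [hm']; ring⟩
    · rw [hm, hu]; push_cast; field_simp
  · refine odd_aux p hp _ (2 * p * k * (n + 1) - c) ?_ ?_ ?_
    · obtain ⟨m, hm'⟩ := hc
      exact ⟨p * k * (n + 1) - m - 1, by rw [hm']; ring⟩
    · rw [hm, hu]; push_cast; field_simp; ring
    · linarith [mmod_lt k hk u]

lemma dmod_half (k p : ℕ) (hk : 0 < k) (hp : 0 < p) :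
    dmod k (1 / (2 * (p:ℝ))) = 1 / (2 * (p:ℝ)) := by
  have hp' : (0:ℝ) < 2 * p := by positivity
  have hk' : (1:ℝ) ≤ k := by exact_mod_cast hk
  have hp1 : (1:ℝ) ≤ p := by exact_mod_cast hp
  have hle : 1 / (2 * (p:ℝ)) ≤ 1 / 2 := by
    rw [div_le_div_iff₀ (by positivity) (by norm_num)]; linarith
  have hb : (0:ℝ) < 1 / (2 * (p:ℝ)) := by positivity
  have hfl : ⌊(1 / (2 * (p:ℝ))) / (k:ℝ)⌋ = 0 := by
    apply Int.floor_eq_zero_iff.mpr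
    constructor
    · positivity
    · rw [div_lt_one (by linarith : (0:ℝ) < (k:ℝ))]; linarith
  have hm : mmod k (1 / (2 * (p:ℝ))) = 1 / (2 * (p:ℝ)) := by
    unfold mmod; rw [hfl]; push_cast; ring
  unfold dmod
  rw [hm, min_eq_left (by linarith)]


/-- The upper bound of the Möbius distance on `M^{q/p}` is attained at the point
`(1/(2p), 1/(2q))`. -/
theorem distMqp_attains_upper_bound (p q : ℕ) (hp : 0 < p) (hq : 0 < q)
    (hpq : Nat.Coprime p q) :
    distMqp p q (0, 0) (1 / (2 * (p : ℝ)), 1 / (2 * (q : ℝ)))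
      = 1 / (2 * (p : ℝ)) + 1 / (2 * (q : ℝ)) := by
  have hp' : (0:ℝ) < p := by exact_mod_cast hp
  have hq' : (0:ℝ) < q := by exact_mod_cast hq
  set S := {v : ℝ | ∃ j ∈ Finset.range (p * q),
    v = dmod q (1 / (2 * (p:ℝ)) - 0 + (j : ℝ) / (p : ℝ)) +
        dmod p (1 / (2 * (q:ℝ)) - 0 + (j : ℝ) / (q : ℝ))} with hS
  have hSeq : distMqp p q (0, 0) (1 / (2 * (p : ℝ)), 1 / (2 * (q : ℝ))) = sInf S := rfl
  have hmem : (1 / (2 * (p:ℝ)) + 1 / (2 * (q:ℝ))) ∈ S := by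
    refine ⟨0, Finset.mem_range.mpr (Nat.mul_pos hp hq), ?_⟩
    simp only [Nat.cast_zero, zero_div, sub_zero, add_zero]
    rw [dmod_half q p hq hp, dmod_half p q hp hq]
  have hlb : ∀ v ∈ S, 1 / (2 * (p:ℝ)) + 1 / (2 * (q:ℝ)) ≤ v := by
    rintro v ⟨j, -, rfl⟩
    have h1 : (1 / (2 * (p:ℝ)) - 0 + (j : ℝ) / (p : ℝ)) = ((2 * (j:ℤ) + 1 : ℤ) : ℝ) / (2 * (p:ℝ)) := by
      push_cast; field_simp; ring
    have h2 : (1 / (2 * (q:ℝ)) - 0 + (j : ℝ) / (q : ℝ)) = ((2 * (j:ℤ) + 1 : ℤ) : ℝ) / (2 * (q:ℝ)) := by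
      push_cast; field_simp; ring
    rw [h1, h2]
    have hodd : Odd (2 * (j:ℤ) + 1) := ⟨j, by ring⟩
    exact add_le_add (dmod_lower q p hq hp _ hodd) (dmod_lower p q hp hq _ hodd)
  rw [hSeq]
  exact le_antisymm (csInf_le ⟨_, hlb⟩ hmem) (le_csInf ⟨_, hmem⟩ hlb)
end

section
/- For coprime positive integers p and q, the set of zero points of M^{q/p} in the region [0,q)×[0,p), i.e., the set {x ∈ [0,q)×[0,p) : dist(x,(0,0)) = 0}, has exactly pq elements. -/

lemma mmod_eq (k : ℕ) (hk : 0 < k) (u : ℝ) : mmod k u = (k:ℝ) * Int.fract (u / k) := by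
  have hk' : (k:ℝ) ≠ 0 := by positivity
  unfold mmod Int.fract
  field_simp

lemma mmod_mem (k : ℕ) (hk : 0 < k) (u : ℝ) : mmod k u ∈ Set.Ico (0:ℝ) k := by
  rw [mmod_eq k hk]
  have h1 := Int.fract_nonneg (u / k)
  have h2 := Int.fract_lt_one (u / k)
  have hk' : (0:ℝ) < k := by positivity
  constructor
  · positivity
  · nlinarith

lemma dmod_nonneg (k : ℕ) (hk : 0 < k) (u : ℝ) : 0 ≤ dmod k u := by
  have h := mmod_mem k hk u
  simp only [Set.mem_Ico] at h
  unfold dmod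
  refine le_min h.1 (by linarith [h.2])

lemma dmod_eq_zero_iff (k : ℕ) (hk : 0 < k) (u : ℝ) :
    dmod k u = 0 ↔ ∃ n : ℤ, u = (k:ℝ) * n := by
  have h := mmod_mem k hk u
  simp only [Set.mem_Ico] at h
  have hk' : (k:ℝ) ≠ 0 := by positivity
  constructor
  · intro hd
    have hm : mmod k u = 0 := by
      unfold dmod at hd
      rcases min_eq_iff.mp hd with ⟨h1, _⟩ | ⟨h1, _⟩
      · exact h1
      · linarith [h.2]
    refine ⟨⌊u / (k:ℝ)⌋, ?_⟩
    unfold mmod at hm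
    linarith
  · rintro ⟨n, rfl⟩
    have : mmod k ((k:ℝ) * n) = 0 := by
      rw [mmod_eq k hk]
      have hdiv : (k:ℝ) * n / (k:ℝ) = (n:ℝ) := by field_simp
      rw [hdiv, Int.fract_intCast, mul_zero]
    unfold dmod
    rw [this]
    simp

/-- The set of zero points of `M^{q/p}` in `[0,q) × [0,p)` has exactly `p*q` elements. -/
theorem ncard_zero_points (p q : ℕ) (hp : 0 < p) (hq : 0 < q) (hpq : Nat.Coprime p q) :
    Set.ncard {x : ℝ × ℝ |
        x ∈ Set.Ico (0:ℝ) (q : ℝ) ×ˢ Set.Ico (0:ℝ) (p : ℝ) ∧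
        distMqp p q x (0, 0) = 0} = p * q := by
  have hp' : (0:ℝ) < p := by positivity
  have hq' : (0:ℝ) < q := by positivity
  set f : ℕ → ℝ × ℝ := fun j => ((j:ℝ)/p, (j:ℝ)/q) with hf
  have hset : {x : ℝ × ℝ |
        x ∈ Set.Ico (0:ℝ) (q : ℝ) ×ˢ Set.Ico (0:ℝ) (p : ℝ) ∧
        distMqp p q x (0, 0) = 0} = f '' ↑(Finset.range (p*q)) := by
    ext x
    -- the inner set of the sInf
    set g : ℕ → ℝ := fun j => dmod q ((0:ℝ) - x.1 + (j : ℝ) / (p : ℝ)) +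
        dmod p ((0:ℝ) - x.2 + (j : ℝ) / (q : ℝ)) with hg
    have hD : {v : ℝ | ∃ j ∈ Finset.range (p * q),
        v = dmod q (((0:ℝ),(0:ℝ)).1 - x.1 + (j : ℝ) / (p : ℝ)) +
          dmod p (((0:ℝ),(0:ℝ)).2 - x.2 + (j : ℝ) / (q : ℝ))} = g '' ↑(Finset.range (p*q)) := by
      ext v
      simp only [Set.mem_setOf_eq, Set.mem_image, Finset.coe_range, Set.mem_Iio,
        Finset.mem_range, hg]
      constructor
      · rintro ⟨j, hj, rfl⟩; exact ⟨j, hj, rfl⟩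
      · rintro ⟨j, hj, rfl⟩; exact ⟨j, hj, rfl⟩
    have hfin : (g '' ↑(Finset.range (p*q))).Finite :=
      Set.Finite.image _ (Finset.finite_toSet _)
    have hne : (g '' ↑(Finset.range (p*q))).Nonempty := by
      refine ⟨g 0, 0, ?_, rfl⟩
      simp [Nat.pos_of_ne_zero, hp, hq, Nat.mul_pos hp hq]
    constructor
    · rintro ⟨hmem, hdist⟩
      simp only [Set.mem_prod, Set.mem_Ico] at hmem
      unfold distMqp at hdist
      rw [hD] at hdist
      have hmemInf := hne.csInf_mem hfin
      rw [hdist] at hmemInf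
      obtain ⟨j, hj, hgj⟩ := hmemInf
      simp only [Finset.coe_range, Set.mem_Iio] at hj
      have h1 : dmod q ((0:ℝ) - x.1 + (j : ℝ) / (p : ℝ)) = 0 := by
        have := dmod_nonneg q hq ((0:ℝ) - x.1 + (j : ℝ) / (p : ℝ))
        have := dmod_nonneg p hp ((0:ℝ) - x.2 + (j : ℝ) / (q : ℝ))
        simp only [hg] at hgj
        linarith
      have h2 : dmod p ((0:ℝ) - x.2 + (j : ℝ) / (q : ℝ)) = 0 := by
        have := dmod_nonneg q hq ((0:ℝ) - x.1 + (j : ℝ) / (p : ℝ))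
        simp only [hg] at hgj
        linarith
      obtain ⟨n, hn⟩ := (dmod_eq_zero_iff q hq _).mp h1
      obtain ⟨m, hm⟩ := (dmod_eq_zero_iff p hp _).mp h2
      have hjq : (j:ℝ)/p < q := by
        rw [div_lt_iff₀ hp']
        have : (j:ℝ) < (p*q : ℕ) := by exact_mod_cast hj
        push_cast at this ⊢; linarith
      have hjp : (j:ℝ)/q < p := by
        rw [div_lt_iff₀ hq']
        have : (j:ℝ) < (p*q : ℕ) := by exact_mod_cast hj
        push_cast at this ⊢; linarith
      have hn0 : n = 0 := by
        have hlb : (-1:ℝ) < n := by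
          rw [show ((-1:ℝ)) = -1 from rfl]
          nlinarith [hmem.1.1, hmem.1.2, div_nonneg (Nat.cast_nonneg j) hp'.le]
        have hub : (n:ℝ) < 1 := by nlinarith [hmem.1.1, div_nonneg (Nat.cast_nonneg j) hp'.le]
        have h1 : (-1:ℤ) < n := by exact_mod_cast hlb
        have h2 : n < (1:ℤ) := by exact_mod_cast hub
        omega
      have hm0 : m = 0 := by
        have hlb : (-1:ℝ) < m := by
          nlinarith [hmem.2.1, hmem.2.2, div_nonneg (Nat.cast_nonneg j) hq'.le]
        have hub : (m:ℝ) < 1 := by nlinarith [hmem.2.1, div_nonneg (Nat.cast_nonneg j) hq'.le]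
        have h1 : (-1:ℤ) < m := by exact_mod_cast hlb
        have h2 : m < (1:ℤ) := by exact_mod_cast hub
        omega
      refine ⟨j, by simpa using hj, ?_⟩
      have hx1 : x.1 = (j:ℝ)/p := by rw [hn0] at hn; push_cast at hn; linarith
      have hx2 : x.2 = (j:ℝ)/q := by rw [hm0] at hm; push_cast at hm; linarith
      simp [hf, Prod.ext_iff, hx1, hx2]
    · rintro ⟨j, hj, rfl⟩
      simp only [Finset.coe_range, Set.mem_Iio] at hj
      have hjq : (j:ℝ)/p < q := by
        rw [div_lt_iff₀ hp']
        have : (j:ℝ) < (p*q : ℕ) := by exact_mod_cast hj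
        push_cast at this ⊢; linarith
      have hjp : (j:ℝ)/q < p := by
        rw [div_lt_iff₀ hq']
        have : (j:ℝ) < (p*q : ℕ) := by exact_mod_cast hj
        push_cast at this ⊢; linarith
      refine ⟨⟨⟨div_nonneg (Nat.cast_nonneg j) hp'.le, hjq⟩,
        ⟨div_nonneg (Nat.cast_nonneg j) hq'.le, hjp⟩⟩, ?_⟩
      unfold distMqp
      rw [hD]
      have hz : g j = 0 := by
        simp only [hg, hf]
        have e1 : (0:ℝ) - (f j).1 + (j:ℝ)/p = 0 := by simp [hf]
        have e2 : (0:ℝ) - (f j).2 + (j:ℝ)/q = 0 := by simp [hf]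
        rw [show ((0:ℝ) - ((j:ℝ)/p, (j:ℝ)/q).1 + (j:ℝ)/p) = 0 by simp,
          show ((0:ℝ) - ((j:ℝ)/p, (j:ℝ)/q).2 + (j:ℝ)/q) = 0 by simp]
        have := (dmod_eq_zero_iff q hq 0).mpr ⟨0, by simp⟩
        have := (dmod_eq_zero_iff p hp 0).mpr ⟨0, by simp⟩
        linarith
      apply le_antisymm
      · refine csInf_le hfin.bddBelow ?_
        exact ⟨j, by simpa using hj, hz⟩
      · refine le_csInf hne ?_
        rintro v ⟨i, hi, rfl⟩
        have := dmod_nonneg q hq ((0:ℝ) - ((j:ℝ)/p, (j:ℝ)/q).1 + (i : ℝ) / (p : ℝ))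
        have := dmod_nonneg p hp ((0:ℝ) - ((j:ℝ)/p, (j:ℝ)/q).2 + (i : ℝ) / (q : ℝ))
        simp only [hg]
        linarith
  rw [hset]
  have hinj : Function.Injective f := by
    intro a b hab
    simp only [hf, Prod.ext_iff] at hab
    have h := hab.1
    field_simp at h
    exact_mod_cast h
  rw [Set.ncard_image_of_injective _ hinj, Set.ncard_coe_finset, Finset.card_range]
end
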